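/- For every closed expression e, the lazy Krivine machine LK and its pointer-refined counterpart LK* (with store-allocated continuations) operate in lock-step: the reachable state sets are isomorphic under the map that recursively dereferences continuation addresses through the store. -/

import Mathlib

/- Statement 8: for every closed expression, the lazy Krivine machine LK and
   its pointer-refined counterpart LK* (store-allocated continuations)
   operate in lock-step; the reachable state sets are isomorphic under the
   map that recursively dereferences continuation addresses through the
   store. -/

inductive Exp : Type
  | ref : String → Exp
  | lam : String → Exp → Exp
  | app : Exp → Exp → Exp
deriving DecidableEq

def Exp.fv : Exp → List String
  | .ref x => [x]
  | .lam x e => e.fv.filter (· ≠ x)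
  | .app e₀ e₁ => e₀.fv ++ e₁.fv

def Exp.Closed (e : Exp) : Prop := e.fv = []

abbrev Addr := ℕ
abbrev Env := List (String × Addr)

/- The LK machine: storables are delayed or computed closures; continuations
   are inductive. -/

inductive LKont : Type
  | mt
  | c₁ (a : Addr) (κ : LKont)
  | c₂ (a : Addr) (κ : LKont)

inductive LSto : Type
  | delayed (e : Exp) (ρ : Env)
  | computed (v : Exp) (ρ : Env)

abbrev LStore := List (Addr × LSto)
abbrev LKState := Exp × Env × LStore × LKont

inductive LKStep : LKState → LKState → Prop
  | varDelayed {x ρ σ κ a e ρ'} :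
      List.lookup x ρ = some a → List.lookup a σ = some (.delayed e ρ') →
      LKStep (.ref x, ρ, σ, κ) (e, ρ', σ, .c₁ a κ)
  | varComputed {x ρ σ κ a v ρ'} :
      List.lookup x ρ = some a → List.lookup a σ = some (.computed v ρ') →
      LKStep (.ref x, ρ, σ, κ) (v, ρ', σ, κ)
  | app {e₀ e₁ ρ σ κ} {a : Addr} :
      List.lookup a σ = none →
      LKStep (.app e₀ e₁, ρ, σ, κ)
        (e₀, ρ, (a, .delayed e₁ ρ) :: σ, .c₂ a κ)
  | update {x e ρ σ a κ} :
      LKStep (.lam x e, ρ, σ, .c₁ a κ)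
        (.lam x e, ρ, (a, .computed (.lam x e) ρ) :: σ, κ)
  | beta {x e ρ σ a κ} :
      LKStep (.lam x e, ρ, σ, .c₂ a κ) (e, (x, a) :: ρ, σ, κ)

def injLK (e : Exp) : LKState := (e, [], [], .mt)

/- The LK* machine: the continuation argument of c₁ and c₂ is replaced by a
   store address, and storables are extended to include continuations. -/

inductive PKont : Type
  | mt
  | c₁ (a : Addr) (b : Addr)
  | c₂ (a : Addr) (b : Addr)

inductive PSto : Type
  | delayed (e : Exp) (ρ : Env)
  | computed (v : Exp) (ρ : Env)
  | kont (κ : PKont)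

abbrev PStore := List (Addr × PSto)
abbrev LKPState := Exp × Env × PStore × PKont

inductive LKPStep : LKPState → LKPState → Prop
  | varDelayed {x ρ σ κ a e ρ'} {b : Addr} :
      List.lookup x ρ = some a → List.lookup a σ = some (.delayed e ρ') →
      List.lookup b σ = none →
      LKPStep (.ref x, ρ, σ, κ) (e, ρ', (b, .kont κ) :: σ, .c₁ a b)
  | varComputed {x ρ σ κ a v ρ'} :
      List.lookup x ρ = some a → List.lookup a σ = some (.computed v ρ') →
      LKPStep (.ref x, ρ, σ, κ) (v, ρ', σ, κ)
  | app {e₀ e₁ ρ σ κ} {a b : Addr} :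
      List.lookup a σ = none → List.lookup b σ = none → a ≠ b →
      LKPStep (.app e₀ e₁, ρ, σ, κ)
        (e₀, ρ, (b, .kont κ) :: (a, .delayed e₁ ρ) :: σ, .c₂ a b)
  | update {x e ρ σ a b κ} :
      List.lookup b σ = some (.kont κ) →
      LKPStep (.lam x e, ρ, σ, .c₁ a b)
        (.lam x e, ρ, (a, .computed (.lam x e) ρ) :: σ, κ)
  | beta {x e ρ σ a b κ} :
      List.lookup b σ = some (.kont κ) →
      LKPStep (.lam x e, ρ, σ, .c₂ a b) (e, (x, a) :: ρ, σ, κ)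

def injLKP (e : Exp) : LKPState := (e, [], [], .mt)

/-- Unfolding an LK* continuation into an LK continuation by recursively
    dereferencing continuation addresses through the store. -/
inductive Unfold (σ : PStore) : PKont → LKont → Prop
  | mt : Unfold σ .mt .mt
  | c₁ {a b κ' κc} :
      List.lookup b σ = some (.kont κ') → Unfold σ κ' κc →
      Unfold σ (.c₁ a b) (.c₁ a κc)
  | c₂ {a b κ' κc} :
      List.lookup b σ = some (.kont κ') → Unfold σ κ' κc →
      Unfold σ (.c₂ a b) (.c₂ a κc)

/-- Correspondence: same control and environment, the LK store is the
    delayed/computed part of the LK* store, and the LK continuation is the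
    unfolding of the LK* continuation. -/
def Corr : LKPState → LKState → Prop
  | (e, ρ, σ, κ), (e', ρ', σ', κ') =>
      e = e' ∧ ρ = ρ' ∧
      (∀ (a : Addr) (d : Exp) (ρd : Env),
        (List.lookup a σ' = some (.delayed d ρd) ↔
          List.lookup a σ = some (.delayed d ρd)) ∧
        (List.lookup a σ' = some (.computed d ρd) ↔
          List.lookup a σ = some (.computed d ρd))) ∧
      Unfold σ κ κ'

/-- Exactly-n-step iteration of a relation. -/
def StepN {α : Type _} (r : α → α → Prop) : ℕ → α → α → Prop
  | 0, a, b => a = b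
  | n + 1, a, b => ∃ c, r a c ∧ StepN r n c b

/- ===== Auxiliary machinery ===== -/

theorem lookup_cons' {β : Type _} (a k : Addr) (v : β) (l : List (Addr × β)) :
    List.lookup a ((k, v) :: l) = if a = k then some v else List.lookup a l := by
  simp only [List.lookup, beq_iff_eq]
  split <;> simp_all

theorem mem_keys_of_lookup {β : Type _} {l : List (Addr × β)} {a : Addr} {v : β}
    (h : List.lookup a l = some v) : a ∈ l.map Prod.fst := by
  induction l with
  | nil => simp [List.lookup] at h
  | cons p t ih =>
    rw [show p = (p.1, p.2) from rfl, lookup_cons'] at h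
    by_cases hk : a = p.1
    · simp [hk]
    · rw [if_neg hk] at h
      simp [ih h]

theorem le_foldr_max (L : List ℕ) : ∀ x ∈ L, x ≤ L.foldr max 0 := by
  induction L with
  | nil => simp
  | cons h t ih =>
    intro x hx
    rcases List.mem_cons.mp hx with rfl | hx
    · exact le_max_left _ _
    · exact le_trans (ih x hx) (le_max_right _ _)

theorem fresh_exists {β : Type _} (l : List (Addr × β)) (A : List Addr) :
    ∃ b : Addr, List.lookup b l = none ∧ b ∉ A := by
  set m := (l.map Prod.fst ++ A).foldr max 0 with hm
  refine ⟨m + 1, ?_, ?_⟩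
  · cases hc : List.lookup (m + 1) l with
    | none => rfl
    | some v =>
      have := le_foldr_max (l.map Prod.fst ++ A) (m + 1)
        (List.mem_append.mpr (Or.inl (mem_keys_of_lookup hc)))
      omega
  · intro hmem
    have := le_foldr_max (l.map Prod.fst ++ A) (m + 1)
      (List.mem_append.mpr (Or.inr hmem))
    omega

/-- The store-agreement part of `Corr`. -/
def StoAgree (σp : PStore) (σ : LStore) : Prop :=
  ∀ (a : Addr) (d : Exp) (ρd : Env),
    (List.lookup a σ = some (.delayed d ρd) ↔
      List.lookup a σp = some (.delayed d ρd)) ∧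
    (List.lookup a σ = some (.computed d ρd) ↔
      List.lookup a σp = some (.computed d ρd))

theorem StoAgree.none_right {σp σ} (h : StoAgree σp σ) {b : Addr}
    (hb : List.lookup b σp = none) : List.lookup b σ = none := by
  cases hc : List.lookup b σ with
  | none => rfl
  | some d =>
    cases d with
    | delayed d ρ => rw [(h b d ρ).1.mp hc] at hb; cases hb
    | computed d ρ => rw [(h b d ρ).2.mp hc] at hb; cases hb

theorem StoAgree.cons_delayed {σp σ} (h : StoAgree σp σ) (a : Addr) (d : Exp) (ρd : Env) :
    StoAgree ((a, .delayed d ρd) :: σp) ((a, .delayed d ρd) :: σ) := by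
  intro x d' ρ'
  rw [lookup_cons', lookup_cons']
  by_cases hx : x = a
  · simp [hx]
  · rw [if_neg hx, if_neg hx]; exact h x d' ρ'

theorem StoAgree.cons_computed {σp σ} (h : StoAgree σp σ) (a : Addr) (d : Exp) (ρd : Env) :
    StoAgree ((a, .computed d ρd) :: σp) ((a, .computed d ρd) :: σ) := by
  intro x d' ρ'
  rw [lookup_cons', lookup_cons']
  by_cases hx : x = a
  · simp [hx]
  · rw [if_neg hx, if_neg hx]; exact h x d' ρ'

theorem StoAgree.cons_kont {σp σ} (h : StoAgree σp σ) {b : Addr} {κ : PKont}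
    (hb : List.lookup b σ = none) :
    StoAgree ((b, .kont κ) :: σp) σ := by
  intro x d' ρ'
  rw [lookup_cons']
  by_cases hx : x = b
  · subst hx; simp [hb]
  · rw [if_neg hx]; exact h x d' ρ'

theorem Unfold.weaken {σp : PStore} {κp κ} (h : Unfold σp κp κ) (a : Addr) (d : PSto)
    (ha : ∀ κ', List.lookup a σp ≠ some (.kont κ')) :
    Unfold ((a, d) :: σp) κp κ := by
  induction h with
  | mt => exact .mt
  | @c₁ a' b κ' κc hb hun ih =>
    refine .c₁ ?_ ih
    rw [lookup_cons']
    by_cases hba : b = a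
    · exact absurd (hba ▸ hb) (ha κ')
    · rw [if_neg hba]; exact hb
  | @c₂ a' b κ' κc hb hun ih =>
    refine .c₂ ?_ ih
    rw [lookup_cons']
    by_cases hba : b = a
    · exact absurd (hba ▸ hb) (ha κ')
    · rw [if_neg hba]; exact hb

/-- Addresses occurring as the first argument of LK continuation frames. -/
def KA : LKont → List Addr
  | .mt => []
  | .c₁ a κ => a :: KA κ
  | .c₂ a κ => a :: KA κ

def KDom (κ : LKont) (σ : LStore) : Prop :=
  ∀ a ∈ KA κ, ∃ d, List.lookup a σ = some d

theorem KDom.cons {κ : LKont} {σ : LStore} (h : KDom κ σ) (a : Addr) (d : LSto) :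
    KDom κ ((a, d) :: σ) := by
  intro x hx
  rcases h x hx with ⟨d', hd'⟩
  rw [lookup_cons']
  by_cases hxa : x = a
  · exact ⟨d, by rw [if_pos hxa]⟩
  · exact ⟨d', by rw [if_neg hxa]; exact hd'⟩

theorem stepN_succ' {α : Type _} (r : α → α → Prop) (n : ℕ) (a c : α) :
    StepN r (n + 1) a c ↔ ∃ b, StepN r n a b ∧ r b c := by
  induction n generalizing a with
  | zero =>
    simp only [StepN]
    constructor
    · rintro ⟨b, hr, h0⟩
      exact ⟨a, rfl, h0 ▸ hr⟩
    · rintro ⟨b, h0, hr⟩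
      exact ⟨c, h0 ▸ hr, rfl⟩
  | succ n ih =>
    simp only [StepN]
    constructor
    · rintro ⟨d, hr, hrest⟩
      obtain ⟨b, hn, hlast⟩ := (ih d).mp hrest
      exact ⟨b, ⟨d, hr, hn⟩, hlast⟩
    · rintro ⟨b, ⟨d, hr, hn⟩, hlast⟩
      exact ⟨d, hr, (ih d).mpr ⟨b, hn, hlast⟩⟩
theorem main_lemma (e : Exp) (n : ℕ) :
    (∀ ς : LKState, StepN LKStep n (injLK e) ς → ∀ A : List Addr,
      (∀ a ∈ A, List.lookup a ς.2.2.1 = none) →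
      ∃ ςp : LKPState, StepN LKPStep n (injLKP e) ςp ∧ Corr ςp ς ∧
        KDom ς.2.2.2 ς.2.2.1 ∧ (∀ a ∈ A, List.lookup a ςp.2.2.1 = none)) ∧
    (∀ ςp : LKPState, StepN LKPStep n (injLKP e) ςp →
      ∃ ς : LKState, StepN LKStep n (injLK e) ς ∧ Corr ςp ς ∧
        KDom ς.2.2.2 ς.2.2.1) := by
  induction n with
  | zero =>
    constructor
    · intro ς h A hA
      have h' : injLK e = ς := h
      subst h'
      refine ⟨injLKP e, rfl, ⟨rfl, rfl, ?_, .mt⟩, ?_, ?_⟩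
      · intro a d ρd; simp [List.lookup]
      · intro a ha; simp [KA, injLK] at ha
      · intro a ha; simp [List.lookup, injLKP]
    · intro ςp h
      have h' : injLKP e = ςp := h
      subst h'
      refine ⟨injLK e, rfl, ⟨rfl, rfl, ?_, .mt⟩, ?_⟩
      · intro a d ρd; simp [List.lookup]
      · intro a ha; simp [KA, injLK] at ha
  | succ n ih =>
    constructor
    · -- forward direction
      intro ς' hstep A hA
      obtain ⟨ς, hn, hs⟩ := (stepN_succ' LKStep n _ _).mp hstep
      cases hs with
      | @varDelayed x ρ σ κ a ev ρ' hx hσ =>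
        obtain ⟨ςp, hpn, hcorr, hk, hAf⟩ := ih.1 _ hn A hA
        obtain ⟨ep, ρp, σp, κp⟩ := ςp
        obtain ⟨heq, hρ, hag, hun⟩ := hcorr
        subst heq; subst hρ
        obtain ⟨b, hbf, hbA⟩ := fresh_exists σp A
        have hσp : List.lookup a σp = some (.delayed ev ρ') := (hag a ev ρ').1.mp hσ
        refine ⟨(ev, ρ', (b, .kont κp) :: σp, .c₁ a b),
          (stepN_succ' LKPStep n _ _).mpr ⟨_, hpn, .varDelayed hx hσp hbf⟩,
          ⟨rfl, rfl, StoAgree.cons_kont hag (StoAgree.none_right hag hbf), ?_⟩, ?_, ?_⟩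
        · refine Unfold.c₁ ?_ (hun.weaken b _ (fun κ' h => by rw [hbf] at h; cases h))
          rw [lookup_cons', if_pos rfl]
        · intro y hy
          rcases List.mem_cons.mp hy with rfl | hy
          · exact ⟨_, hσ⟩
          · exact hk y hy
        · intro y hyA
          rw [lookup_cons', if_neg (fun h => hbA (by rw [← h]; exact hyA))]
          exact hAf y hyA
      | @varComputed x ρ σ κ a v ρ' hx hσ =>
        obtain ⟨ςp, hpn, hcorr, hk, hAf⟩ := ih.1 _ hn A hA
        obtain ⟨ep, ρp, σp, κp⟩ := ςp
        obtain ⟨heq, hρ, hag, hun⟩ := hcorr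
        subst heq; subst hρ
        have hσp : List.lookup a σp = some (.computed v ρ') := (hag a v ρ').2.mp hσ
        exact ⟨(v, ρ', σp, κp),
          (stepN_succ' LKPStep n _ _).mpr ⟨_, hpn, .varComputed hx hσp⟩,
          ⟨rfl, rfl, hag, hun⟩, hk, hAf⟩
      | @app e₀ e₁ ρ σ κ a ha =>
        have hA' : ∀ y ∈ a :: A, List.lookup y σ = none := by
          intro y hy
          rcases List.mem_cons.mp hy with rfl | hy
          · exact ha
          · have := hA y hy
            rw [lookup_cons'] at this
            by_cases hya : y = a
            · rw [if_pos hya] at this; cases this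
            · rwa [if_neg hya] at this
        obtain ⟨ςp, hpn, hcorr, hk, hAf⟩ := ih.1 _ hn (a :: A) hA'
        obtain ⟨ep, ρp, σp, κp⟩ := ςp
        obtain ⟨heq, hρ, hag, hun⟩ := hcorr
        subst heq; subst hρ
        obtain ⟨b, hbf, hbA⟩ := fresh_exists σp (a :: A)
        have haf : List.lookup a σp = none := hAf a ((List.mem_cons_self (a := a) (l := A)))
        have hba : a ≠ b := fun h => hbA (h ▸ (List.mem_cons_self (a := a) (l := A)))
        have hbσ : List.lookup b σ = none := StoAgree.none_right hag hbf
        have hag1 : StoAgree ((a, .delayed e₁ ρp) :: σp) ((a, .delayed e₁ ρp) :: σ) :=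
          StoAgree.cons_delayed hag a e₁ ρp
        have hbσ1 : List.lookup b ((a, .delayed e₁ ρp) :: σ) = none := by
          rw [lookup_cons', if_neg (fun h => hba h.symm)]; exact hbσ
        refine ⟨(e₀, ρp, (b, .kont κp) :: (a, .delayed e₁ ρp) :: σp, .c₂ a b),
          (stepN_succ' LKPStep n _ _).mpr ⟨_, hpn, .app haf hbf hba⟩,
          ⟨rfl, rfl, StoAgree.cons_kont hag1 hbσ1, ?_⟩, ?_, ?_⟩
        · refine Unfold.c₂ ?_
            ((hun.weaken a _ (fun κ' h => by rw [haf] at h; cases h)).weaken b _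
              (fun κ' h => by
                rw [lookup_cons', if_neg (fun h' => hba h'.symm), hbf] at h
                cases h))
          rw [lookup_cons', if_pos rfl]
        · have hk' : KDom κ σ := fun y hy => hk y hy
          intro y hy
          rcases List.mem_cons.mp hy with rfl | hy
          · exact ⟨_, by rw [lookup_cons', if_pos rfl]⟩
          · exact KDom.cons hk' a _ y hy
        · intro y hyA
          have hya : y ≠ a := fun h => by
            have := hA y hyA
            rw [lookup_cons', if_pos h] at this
            cases this
          have hyb : y ≠ b := fun h => hbA (h ▸ List.mem_cons.mpr (Or.inr hyA))
          rw [lookup_cons', if_neg hyb, lookup_cons', if_neg hya]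
          exact hAf y (List.mem_cons.mpr (Or.inr hyA))
      | @update x e₀ ρ σ a κ =>
        have hA' : ∀ y ∈ A, List.lookup y σ = none := by
          intro y hy
          have := hA y hy
          rw [lookup_cons'] at this
          by_cases hya : y = a
          · rw [if_pos hya] at this; cases this
          · rwa [if_neg hya] at this
        obtain ⟨ςp, hpn, hcorr, hk, hAf⟩ := ih.1 _ hn A hA'
        obtain ⟨ep, ρp, σp, κp⟩ := ςp
        obtain ⟨heq, hρ, hag, hun⟩ := hcorr
        subst heq; subst hρ
        cases hun with
        | @c₁ _ b κ₂ _ hb hun2 =>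
          obtain ⟨d, hda⟩ := hk a (List.mem_cons_self (a := a))
          have hnk : ∀ κ', List.lookup a σp ≠ some (.kont κ') := by
            intro κ' h
            cases d with
            | delayed d0 ρ0 => rw [(hag a d0 ρ0).1.mp hda] at h; cases h
            | computed d0 ρ0 => rw [(hag a d0 ρ0).2.mp hda] at h; cases h
          refine ⟨(.lam x e₀, ρp, (a, .computed (.lam x e₀) ρp) :: σp, κ₂),
            (stepN_succ' LKPStep n _ _).mpr ⟨_, hpn, .update hb⟩,
            ⟨rfl, rfl, StoAgree.cons_computed hag a (.lam x e₀) ρp,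
              hun2.weaken a _ hnk⟩, ?_, ?_⟩
          · have hk' : KDom κ σ := fun y hy => hk y (List.mem_cons.mpr (Or.inr hy))
            exact KDom.cons hk' a _
          · intro y hyA
            have hya : y ≠ a := fun h => by
              have := hA y hyA
              rw [lookup_cons', if_pos h] at this
              cases this
            rw [lookup_cons', if_neg hya]
            exact hAf y hyA
      | @beta x e₀ ρ σ a κ =>
        obtain ⟨ςp, hpn, hcorr, hk, hAf⟩ := ih.1 _ hn A hA
        obtain ⟨ep, ρp, σp, κp⟩ := ςp
        obtain ⟨heq, hρ, hag, hun⟩ := hcorr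
        subst heq; subst hρ
        cases hun with
        | @c₂ _ b κ₂ _ hb hun2 =>
          exact ⟨(e₀, (x, a) :: ρp, σp, κ₂),
            (stepN_succ' LKPStep n _ _).mpr ⟨_, hpn, .beta hb⟩,
            ⟨rfl, rfl, hag, hun2⟩,
            fun y hy => hk y (List.mem_cons.mpr (Or.inr hy)), hAf⟩
    · -- backward direction
      intro ςp' hstep
      obtain ⟨ςp, hpn, hs⟩ := (stepN_succ' LKPStep n _ _).mp hstep
      obtain ⟨ς, hn, hcorr, hk⟩ := ih.2 _ hpn
      obtain ⟨e1, ρ1, σ1, κ1⟩ := ς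
      cases hs with
      | @varDelayed x ρ σp κp a ev ρ' b hx hσp hbf =>
        obtain ⟨heq, hρ, hag, hun⟩ := hcorr
        subst heq; subst hρ
        have hσ : List.lookup a σ1 = some (.delayed ev ρ') := (hag a ev ρ').1.mpr hσp
        have hbσ : List.lookup b σ1 = none := StoAgree.none_right hag hbf
        refine ⟨(ev, ρ', σ1, .c₁ a κ1),
          (stepN_succ' LKStep n _ _).mpr ⟨_, hn, .varDelayed hx hσ⟩,
          ⟨rfl, rfl, StoAgree.cons_kont hag hbσ, ?_⟩, ?_⟩
        · refine Unfold.c₁ ?_ (hun.weaken b _ (fun κ' h => by rw [hbf] at h; cases h))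
          rw [lookup_cons', if_pos rfl]
        · intro y hy
          rcases List.mem_cons.mp hy with rfl | hy
          · exact ⟨_, hσ⟩
          · exact hk y hy
      | @varComputed x ρ σp κp a v ρ' hx hσp =>
        obtain ⟨heq, hρ, hag, hun⟩ := hcorr
        subst heq; subst hρ
        have hσ : List.lookup a σ1 = some (.computed v ρ') := (hag a v ρ').2.mpr hσp
        exact ⟨(v, ρ', σ1, κ1),
          (stepN_succ' LKStep n _ _).mpr ⟨_, hn, .varComputed hx hσ⟩,
          ⟨rfl, rfl, hag, hun⟩, hk⟩
      | @app e₀ e₁ ρ σp κp a b ha hb hab =>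
        obtain ⟨heq, hρ, hag, hun⟩ := hcorr
        subst heq; subst hρ
        have haσ : List.lookup a σ1 = none := StoAgree.none_right hag ha
        have hbσ : List.lookup b σ1 = none := StoAgree.none_right hag hb
        have hag1 : StoAgree ((a, .delayed e₁ ρ) :: σp) ((a, .delayed e₁ ρ) :: σ1) :=
          StoAgree.cons_delayed hag a e₁ ρ
        have hbσ1 : List.lookup b ((a, .delayed e₁ ρ) :: σ1) = none := by
          rw [lookup_cons', if_neg (fun h => hab h.symm)]; exact hbσ
        refine ⟨(e₀, ρ, (a, .delayed e₁ ρ) :: σ1, .c₂ a κ1),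
          (stepN_succ' LKStep n _ _).mpr ⟨_, hn, .app haσ⟩,
          ⟨rfl, rfl, StoAgree.cons_kont hag1 hbσ1, ?_⟩, ?_⟩
        · refine Unfold.c₂ ?_
            ((hun.weaken a _ (fun κ' h => by rw [ha] at h; cases h)).weaken b _
              (fun κ' h => by
                rw [lookup_cons', if_neg (fun h' => hab h'.symm), hb] at h
                cases h))
          rw [lookup_cons', if_pos rfl]
        · have hk' : KDom κ1 σ1 := fun y hy => hk y hy
          intro y hy
          rcases List.mem_cons.mp hy with rfl | hy
          · exact ⟨_, by rw [lookup_cons', if_pos rfl]⟩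
          · exact KDom.cons hk' a _ y hy
      | @update x e₀ ρ σp a b κp hb =>
        obtain ⟨heq, hρ, hag, hun⟩ := hcorr
        subst heq; subst hρ
        cases hun with
        | @c₁ _ _ κ₂ κc hb' hun2 =>
          have hκ : κ₂ = κp := by
            rw [hb'] at hb
            cases hb
            rfl
          subst hκ
          obtain ⟨d, hda⟩ := hk a (List.mem_cons_self (a := a))
          have hnk : ∀ κ', List.lookup a σp ≠ some (.kont κ') := by
            intro κ' h
            cases d with
            | delayed d0 ρ0 => rw [(hag a d0 ρ0).1.mp hda] at h; cases h
            | computed d0 ρ0 => rw [(hag a d0 ρ0).2.mp hda] at h; cases h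
          refine ⟨(.lam x e₀, ρ, (a, .computed (.lam x e₀) ρ) :: σ1, κc),
            (stepN_succ' LKStep n _ _).mpr ⟨_, hn, .update⟩,
            ⟨rfl, rfl, StoAgree.cons_computed hag a (.lam x e₀) ρ,
              hun2.weaken a _ hnk⟩, ?_⟩
          have hk' : KDom κc σ1 := fun y hy => hk y (List.mem_cons.mpr (Or.inr hy))
          exact KDom.cons hk' a _
      | @beta x e₀ ρ σp a b κp hb =>
        obtain ⟨heq, hρ, hag, hun⟩ := hcorr
        subst heq; subst hρ
        cases hun with
        | @c₂ _ _ κ₂ κc hb' hun2 =>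
          have hκ : κ₂ = κp := by
            rw [hb'] at hb
            cases hb
            rfl
          subst hκ
          exact ⟨(e₀, (x, a) :: ρ, σ1, κc),
            (stepN_succ' LKStep n _ _).mpr ⟨_, hn, .beta⟩,
            ⟨rfl, rfl, hag, hun2⟩,
            fun y hy => hk y (List.mem_cons.mpr (Or.inr hy))⟩

theorem lk_lkstar_lockstep (e : Exp) (he : e.Closed) (n : ℕ) :
    (∀ ς : LKState, StepN LKStep n (injLK e) ς →
      ∃ ςp : LKPState, StepN LKPStep n (injLKP e) ςp ∧ Corr ςp ς) ∧
    (∀ ςp : LKPState, StepN LKPStep n (injLKP e) ςp →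
      ∃ ς : LKState, StepN LKStep n (injLK e) ς ∧ Corr ςp ς) := by
  constructor
  · intro ς h
    obtain ⟨ςp, hpn, hcorr, -, -⟩ :=
      (main_lemma e n).1 ς h [] (by intro a ha; cases ha)
    exact ⟨ςp, hpn, hcorr⟩
  · intro ςp h
    obtain ⟨ς, hn, hcorr, -⟩ := (main_lemma e n).2 ςp h
    exact ⟨ς, hn, hcorr⟩
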